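/- Let f: P → Q and f': P' → Q' be injective morphisms in P. Then coker(f) ≅ coker(f') in R if and only if there exist objects L, L' ∈ P and an isomorphism of complexes C_f ⊕ K_{L'} ≅ K_L ⊕ C_{f'} in C(P). -/
import Mathlib


set_option linter.unusedSectionVars false

open CategoryTheory CategoryTheory.Limits Opposite

noncomputable section

universe u

variable (k : Type) [Field k] [Fintype k]
variable (R : Type u) [SmallCategory R] [Abelian R] [Linear k R] [EnoughProjectives R]

/-- The objects `A` of `R` such that `Hom(M, A)` is a finite set for every `M`. -/
def IsFinHom (A : R) : Prop := ∀ M : R, Finite (M ⟶ A)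

/-- The Euler form `⟨M,A⟩ = dim Hom(M,A) - dim Ext¹(M,A)`. -/
def euler (M A : R) : ℤ :=
  (Module.finrank k (M ⟶ A) : ℤ) -
    (Module.finrank k (((_root_.Ext k R 1).obj (op M)).obj A) : ℤ)

/-- The set of relations defining the Grothendieck group of `R`. -/
def sesSet : Set (FreeAbelianGroup R) :=
  {x | ∃ S : ShortComplex R, S.ShortExact ∧
    x = FreeAbelianGroup.of S.X₂ - FreeAbelianGroup.of S.X₁ - FreeAbelianGroup.of S.X₃}

/-- The Grothendieck group `K(R)`. -/
abbrev K0 := FreeAbelianGroup R ⧸ AddSubgroup.closure (sesSet R)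

/-- The class of an object in `K(R)`. -/
def K0.cls (X : R) : K0 R := QuotientAddGroup.mk (FreeAbelianGroup.of X)

/-- The set of relations defining the Grothendieck group of the subcategory `A`. -/
def sesSetA : Set (FreeAbelianGroup {A : R // IsFinHom R A}) :=
  {x | ∃ (S : ShortComplex R) (h1 : IsFinHom R S.X₁) (h2 : IsFinHom R S.X₂)
      (h3 : IsFinHom R S.X₃), S.ShortExact ∧
    x = FreeAbelianGroup.of ⟨S.X₂, h2⟩ - FreeAbelianGroup.of ⟨S.X₁, h1⟩ -
      FreeAbelianGroup.of ⟨S.X₃, h3⟩}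

/-- The Grothendieck group `K(A)`. -/
abbrev KA := FreeAbelianGroup {A : R // IsFinHom R A} ⧸ AddSubgroup.closure (sesSetA R)

/-- The class of an object of `A` in `K(A)`. -/
def KA.cls (A : {A : R // IsFinHom R A}) : KA R := QuotientAddGroup.mk (FreeAbelianGroup.of A)

/-- `R` is hereditary, i.e. of global dimension at most 1. -/
def Hereditary : Prop :=
  ∀ X Y : R, Subsingleton (((_root_.Ext k R 2).obj (op X)).obj Y)

/-- Condition (c): cancellation for projectives. -/
def CondC : Prop :=
  ∀ P Q M : R, Projective P → Projective Q → Projective M →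
    Nonempty ((M ⊞ P) ≅ (M ⊞ Q)) → Nonempty (P ≅ Q)

/-- Condition (d): every element of `K(R)` is a `ℚ`-linear combination of classes of
objects of `A`. -/
def CondD : Prop :=
  ∀ x : K0 R, ∃ n : ℕ, n ≠ 0 ∧ (n : ℤ) • x ∈
    AddSubgroup.closure (Set.range fun A : {A : R // IsFinHom R A} => K0.cls R A.1)

/-- Condition (e). -/
def CondE : Prop :=
  ∀ A B : R, IsFinHom R A → IsFinHom R B → K0.cls R A = K0.cls R B →
    ∀ P : R, Projective P → Nat.card (P ⟶ A) = Nat.card (P ⟶ B)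

structure Z2Cx where
  X0 : R
  X1 : R
  d0 : X0 ⟶ X1
  d1 : X1 ⟶ X0
  d01 : d0 ≫ d1 = 0
  d10 : d1 ≫ d0 = 0

namespace Z2Cx

variable {R}

/-- Morphisms of `ℤ/2`-graded complexes. -/
@[ext] structure Hom (M N : Z2Cx R) where
  f0 : M.X0 ⟶ N.X0
  f1 : M.X1 ⟶ N.X1
  comm0 : M.d0 ≫ f1 = f0 ≫ N.d0
  comm1 : M.d1 ≫ f0 = f1 ≫ N.d1

instance : CategoryStruct (Z2Cx R) where
  Hom := Hom
  id M := ⟨𝟙 _, 𝟙 _, by simp, by simp⟩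
  comp {M N P} f g := ⟨f.f0 ≫ g.f0, f.f1 ≫ g.f1, by
      rw [← Category.assoc, f.comm0, Category.assoc, g.comm0, Category.assoc], by
      rw [← Category.assoc, f.comm1, Category.assoc, g.comm1, Category.assoc]⟩

@[simp] lemma id_f0 (M : Z2Cx R) : (𝟙 M : Hom M M).f0 = 𝟙 M.X0 := rfl
@[simp] lemma id_f1 (M : Z2Cx R) : (𝟙 M : Hom M M).f1 = 𝟙 M.X1 := rfl
@[simp] lemma comp_f0 {M N P : Z2Cx R} (f : M ⟶ N) (g : N ⟶ P) :
    (f ≫ g).f0 = Hom.f0 f ≫ Hom.f0 g := rfl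
@[simp] lemma comp_f1 {M N P : Z2Cx R} (f : M ⟶ N) (g : N ⟶ P) :
    (f ≫ g).f1 = Hom.f1 f ≫ Hom.f1 g := rfl

instance : Category (Z2Cx R) where
  id_comp f := by apply Hom.ext <;> simp
  comp_id f := by apply Hom.ext <;> simp
  assoc f g h := by apply Hom.ext <;> simp

variable (R)

/-- The two-term complex `C_f` associated to a morphism `f`, concentrated so that
`X1 = P`, `X0 = Q`, `d1 = f`, `d0 = 0`. -/
def Cf {P Q : R} (f : P ⟶ Q) : Z2Cx R := ⟨Q, P, 0, f, by simp, by simp⟩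

/-- The shift involution `†`: it interchanges the gradings and negates the differentials. -/
def dagger (M : Z2Cx R) : Z2Cx R :=
  ⟨M.X1, M.X0, -M.d1, -M.d0, by simp [M.d10], by simp [M.d01]⟩

/-- The acyclic complex `K_P` with `d1 = 𝟙 P` and `d0 = 0`. -/
def KP (P : R) : Z2Cx R := ⟨P, P, 0, 𝟙 P, by simp, by simp⟩

/-- Direct sum of `ℤ/2`-graded complexes. -/
def dsum (M N : Z2Cx R) : Z2Cx R where
  X0 := M.X0 ⊞ N.X0
  X1 := M.X1 ⊞ N.X1
  d0 := biprod.map M.d0 N.d0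
  d1 := biprod.map M.d1 N.d1
  d01 := by ext <;> simp [M.d01, N.d01]
  d10 := by ext <;> simp [M.d10, N.d10]

/-- Degree `0` homology of a `ℤ/2`-graded complex. -/
def H0 (M : Z2Cx R) : R := (ShortComplex.mk M.d1 M.d0 M.d10).homology

/-- Degree `1` homology of a `ℤ/2`-graded complex. -/
def H1 (M : Z2Cx R) : R := (ShortComplex.mk M.d0 M.d1 M.d01).homology

/-- The homology complex `H•(M•)`, with zero differentials. -/
def Hcx (M : Z2Cx R) : Z2Cx R := ⟨H0 R M, H1 R M, 0, 0, by simp, by simp⟩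

/-- A complex is acyclic if its homology vanishes. -/
def Acyclic (M : Z2Cx R) : Prop := IsZero (H0 R M) ∧ IsZero (H1 R M)

end Z2Cx

open Z2Cx


section AuxStmt6

variable {C : Type*} [Category C] [Abelian C]

/-- The cokernel of `biprod.map f (𝟙 L)` is the cokernel of `f`. -/
def cokernelBiprodRight {X Y : C} (f : X ⟶ Y) (L : C) :
    cokernel (biprod.map f (𝟙 L)) ≅ cokernel f where
  hom := cokernel.desc _ (biprod.fst ≫ cokernel.π f)
    (by rw [biprod.map_fst_assoc, cokernel.condition, comp_zero])
  inv := cokernel.desc f (biprod.inl ≫ cokernel.π _)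
    (by rw [← Category.assoc, ← biprod.inl_map, Category.assoc, cokernel.condition, comp_zero])
  hom_inv_id := by
    have hinr : (biprod.inr : L ⟶ Y ⊞ L) ≫ cokernel.π (biprod.map f (𝟙 L)) = 0 := by
      rw [← Category.id_comp (biprod.inr : L ⟶ Y ⊞ L), ← biprod.inr_map, Category.assoc,
        cokernel.condition, comp_zero]
    ext
    · simp
    · simp [reassoc_of% hinr, hinr]
  inv_hom_id := by
    ext
    simp

/-- The cokernel of `biprod.map (𝟙 L) f` is the cokernel of `f`. -/
def cokernelBiprodLeft {X Y : C} (f : X ⟶ Y) (L : C) :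
    cokernel (biprod.map (𝟙 L) f) ≅ cokernel f where
  hom := cokernel.desc _ (biprod.snd ≫ cokernel.π f)
    (by rw [biprod.map_snd_assoc, cokernel.condition, comp_zero])
  inv := cokernel.desc f (biprod.inr ≫ cokernel.π _)
    (by rw [← Category.assoc, ← biprod.inr_map, Category.assoc, cokernel.condition, comp_zero])
  hom_inv_id := by
    have hinl : (biprod.inl : L ⟶ L ⊞ Y) ≫ cokernel.π (biprod.map (𝟙 L) f) = 0 := by
      rw [← Category.id_comp (biprod.inl : L ⟶ L ⊞ Y), ← biprod.inl_map, Category.assoc,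
        cokernel.condition, comp_zero]
    ext
    · simp [reassoc_of% hinl, hinl]
    · simp
  inv_hom_id := by
    ext
    simp

attribute [local instance] CategoryTheory.Abelian.Pseudoelement.objectToSort
  CategoryTheory.Abelian.Pseudoelement.homToFun

open CategoryTheory.Abelian.Pseudoelement in
/-- A diagram chase: in a commutative square with monos into a common object, if the
horizontal map on targets is epi and a suitable map kills the relevant cokernel class,
the induced map is epi. -/
lemma aux_epi_stmt6 {X₁ Y X₂ Z : C}
    (m₁ : X₁ ⟶ Y) (m₂ : X₂ ⟶ Y) [Mono m₂] (Φ₁ : X₁ ⟶ X₂) (Φ₀ : Y ⟶ Y) [Epi Φ₀]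
    (θ : cokernel m₁ ⟶ Z) [Mono θ] (ρ : Y ⟶ Z)
    (comm : m₁ ≫ Φ₀ = Φ₁ ≫ m₂) (hρ : m₂ ≫ ρ = 0) (hθ : cokernel.π m₁ ≫ θ = Φ₀ ≫ ρ) :
    Epi Φ₁ := by
  apply epi_of_pseudo_surjective
  intro y
  obtain ⟨w, hw⟩ := pseudo_surjective_of_epi Φ₀ (m₂ y)
  have h1 : θ ((cokernel.π m₁) w) = 0 := by
    rw [← Abelian.Pseudoelement.comp_apply, hθ, Abelian.Pseudoelement.comp_apply, hw,
      ← Abelian.Pseudoelement.comp_apply, hρ]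
    exact zero_apply _ _
  have h2 : (cokernel.π m₁) w = 0 := by
    apply pseudo_injective_of_mono θ
    rw [h1, apply_zero]
  obtain ⟨x, hx⟩ := pseudo_exact_of_exact (ShortComplex.exact_cokernel m₁) w h2
  refine ⟨x, pseudo_injective_of_mono m₂ ?_⟩
  rw [← Abelian.Pseudoelement.comp_apply, ← comm, Abelian.Pseudoelement.comp_apply, hx, hw]

end AuxStmt6

/-- An isomorphism of `ℤ/2`-graded complexes from componentwise isomorphisms. -/
def Z2Cx.mkIso {M N : Z2Cx R} (h : M ⟶ N) (h0 : IsIso h.f0) (h1 : IsIso h.f1) : M ≅ N := by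
  haveI := h0; haveI := h1
  refine ⟨h, ⟨inv h.f0, inv h.f1, ?_, ?_⟩, ?_, ?_⟩
  · rw [← cancel_mono h.f1]
    simp [h.comm0]
  · rw [← cancel_mono h.f0]
    simp [h.comm1]
  · apply Z2Cx.Hom.ext <;> simp
  · apply Z2Cx.Hom.ext <;> simp

theorem stmt6 (hH : Hereditary k R) (hc : CondC R) (hd : CondD R) (he : CondE R)
    {P Q P' Q' : R} (hP : Projective P) (hQ : Projective Q) (hP' : Projective P')
    (hQ' : Projective Q') (f : P ⟶ Q) (f' : P' ⟶ Q') (hf : Mono f) (hf' : Mono f') :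
    Nonempty (cokernel f ≅ cokernel f') ↔
      ∃ (L L' : R), Projective L ∧ Projective L' ∧
        Nonempty (dsum R (Cf R f) (KP R L') ≅ dsum R (KP R L) (Cf R f')) := by
  haveI := hP; haveI := hQ; haveI := hP'; haveI := hQ'; haveI := hf; haveI := hf'
  constructor
  · rintro ⟨φ⟩
    obtain ⟨b, hb⟩ : ∃ b : Q ⟶ Q', b ≫ cokernel.π f' = cokernel.π f ≫ φ.hom :=
      ⟨Projective.factorThru _ _, Projective.factorThru_comp _ _⟩
    obtain ⟨b', hb'⟩ : ∃ b' : Q' ⟶ Q, b' ≫ cokernel.π f = cokernel.π f' ≫ φ.inv :=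
      ⟨Projective.factorThru _ _, Projective.factorThru_comp _ _⟩
    have hbb : b' ≫ b ≫ cokernel.π f' = cokernel.π f' := by
      rw [hb, ← Category.assoc, hb', Category.assoc, Iso.inv_hom_id, Category.comp_id]
    obtain ⟨a, ha⟩ : ∃ a : P ⟶ P', a ≫ f' = f ≫ b :=
      ⟨Abelian.monoLift f' (f ≫ b)
        (by rw [Category.assoc, hb, cokernel.condition_assoc, zero_comp]),
       Abelian.monoLift_comp _ _ _⟩
    obtain ⟨s', hs'⟩ : ∃ s' : Q' ⟶ P', s' ≫ f' = b' ≫ b - 𝟙 Q' :=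
      ⟨Abelian.monoLift f' _
        (by rw [Preadditive.sub_comp, Category.assoc, hbb, Category.id_comp, sub_self]),
       Abelian.monoLift_comp _ _ _⟩
    set Φ₀ : Q ⊞ Q' ⟶ Q ⊞ Q' :=
      biprod.desc (biprod.lift (𝟙 Q) b) (biprod.lift (-b') (𝟙 Q' - b' ≫ b)) with hΦ₀
    set Φ₁ : P ⊞ Q' ⟶ Q ⊞ P' :=
      biprod.desc (biprod.lift f a) (biprod.lift (-b') (-s')) with hΦ₁
    haveI : IsIso Φ₀ := by
      refine ⟨⟨biprod.desc (biprod.lift (𝟙 Q - b ≫ b') (-b)) (biprod.lift b' (𝟙 Q')), ?_, ?_⟩⟩ <;>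
        · ext <;>
            simp [hΦ₀, Preadditive.sub_comp, Preadditive.comp_sub] <;>
            abel
    have comm : biprod.map f (𝟙 Q') ≫ Φ₀ = Φ₁ ≫ biprod.map (𝟙 Q) f' := by
      ext <;>
        simp [hΦ₀, hΦ₁, ha, hs', Preadditive.sub_comp, Preadditive.comp_sub]
    haveI : Mono Φ₁ := by
      haveI : Mono (Φ₁ ≫ biprod.map (𝟙 Q) f') := by rw [← comm]; exact mono_comp _ _
      exact mono_of_mono Φ₁ (biprod.map (𝟙 Q) f')
    have hE : Φ₀ ≫ biprod.snd ≫ cokernel.π f' = biprod.fst ≫ cokernel.π f ≫ φ.hom := by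
      apply biprod.hom_ext' <;>
        simp [hΦ₀, hb, Preadditive.sub_comp, hbb, reassoc_of% hb']
    haveI : Epi Φ₁ := by
      refine aux_epi_stmt6 (biprod.map f (𝟙 Q')) (biprod.map (𝟙 Q) f') Φ₁ Φ₀
        ((cokernelBiprodRight f Q').hom ≫ φ.hom) (biprod.snd ≫ cokernel.π f') comm ?_ ?_
      · rw [biprod.map_snd_assoc, cokernel.condition, comp_zero]
      · rw [hE]
        simp [cokernelBiprodRight]
    haveI : IsIso Φ₁ := isIso_of_mono_of_epi _
    refine ⟨Q, Q', hQ, hQ', ⟨Z2Cx.mkIso R ⟨Φ₀, Φ₁, ?_, ?_⟩ ?_ ?_⟩⟩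
    · show biprod.map (0 : Q ⟶ P) (0 : Q' ⟶ Q') ≫ Φ₁ =
        Φ₀ ≫ biprod.map (0 : Q ⟶ Q) (0 : Q' ⟶ P')
      ext <;> simp
    · exact comm
    · exact inferInstanceAs (IsIso Φ₀)
    · exact inferInstanceAs (IsIso Φ₁)
  · rintro ⟨L, L', -, -, ⟨e⟩⟩
    have h00 : e.hom.f0 ≫ e.inv.f0 = 𝟙 _ := by rw [← Z2Cx.comp_f0, e.hom_inv_id, Z2Cx.id_f0]
    have h01 : e.inv.f0 ≫ e.hom.f0 = 𝟙 _ := by rw [← Z2Cx.comp_f0, e.inv_hom_id, Z2Cx.id_f0]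
    have h10 : e.hom.f1 ≫ e.inv.f1 = 𝟙 _ := by rw [← Z2Cx.comp_f1, e.hom_inv_id, Z2Cx.id_f1]
    have h11 : e.inv.f1 ≫ e.hom.f1 = 𝟙 _ := by rw [← Z2Cx.comp_f1, e.inv_hom_id, Z2Cx.id_f1]
    exact ⟨(cokernelBiprodRight f L').symm ≪≫
      cokernel.mapIso (biprod.map f (𝟙 L')) (biprod.map (𝟙 L) f')
        ⟨e.hom.f1, e.inv.f1, h10, h11⟩ ⟨e.hom.f0, e.inv.f0, h00, h01⟩ e.hom.comm1 ≪≫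
      cokernelBiprodLeft f' L⟩

end
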